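/- Let m ≥ 1 and 1 ≤ r ≤ m be integers and set ℓ = m − r. The binary shortened projective Reed–Muller code PRM(r, m−1) is a systematic (n, k) 2^ℓ-server PIR code with n = ∑_{i=r}^{m} C(m,i) and k = C(m,r): for every r-element subset R of [m] there exist 2^ℓ pairwise disjoint nonempty families F₁,…,F_{2^ℓ} of subsets of [m] of cardinality ≥ r such that for every coefficient vector a and every t ∈ {1,…,2^ℓ}, ∑_{S ∈ F_t} f_a(S) = a(R), and one of these families is the singleton {R} (so the code is systematic). -/
import Mathlib

open Finset

lemma prm_key (m r : ℕ) (R U : Finset (Fin m)) (hR : R.card = r) (hU : Disjoint U R)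
    (a : Finset (Fin m) → ZMod 2) :
    ∑ V ∈ (Finset.Icc U (R ∪ U)).filter (fun V => r ≤ V.card),
      ∑ T ∈ V.powerset.filter (fun T => T.card = r), a T = a R := by
  rw [Finset.sum_filter_of_ne]
  swap
  · intro V _ hne
    by_contra hlt
    push_neg at hlt
    apply hne
    have : V.powerset.filter (fun T => T.card = r) = ∅ := by
      rw [Finset.eq_empty_iff_forall_notMem]
      intro T hT
      simp only [mem_filter, mem_powerset] at hT
      have := card_le_card hT.1
      omega
    rw [this, Finset.sum_empty]
  have hstep : ∀ V ∈ Finset.Icc U (R ∪ U),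
      ∑ T ∈ V.powerset.filter (fun T => T.card = r), a T
        = ∑ T ∈ powersetCard r (R ∪ U), if T ⊆ V then a T else 0 := by
    intro V hV
    rw [Finset.mem_Icc] at hV
    rw [← Finset.sum_filter]
    congr 1
    ext T
    simp only [mem_filter, mem_powerset, mem_powersetCard]
    constructor
    · rintro ⟨h1, h2⟩; exact ⟨⟨h1.trans hV.2, h2⟩, h1⟩
    · rintro ⟨⟨_, h2⟩, h3⟩; exact ⟨h3, h2⟩
  rw [Finset.sum_congr rfl hstep, Finset.sum_comm]
  have hterm : ∀ T ∈ powersetCard r (R ∪ U),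
      ∑ V ∈ Finset.Icc U (R ∪ U), (if T ⊆ V then a T else 0)
        = ((2 ^ ((R ∪ U).card - (U ∪ T).card) : ℕ) : ZMod 2) * a T := by
    intro T hT
    rw [mem_powersetCard] at hT
    rw [← Finset.sum_filter]
    have : (Finset.Icc U (R ∪ U)).filter (fun V => T ⊆ V) = Finset.Icc (U ∪ T) (R ∪ U) := by
      ext V
      simp only [mem_filter, Finset.mem_Icc, le_eq_subset, union_subset_iff]
      tauto
    rw [this, Finset.sum_const, card_Icc_finset (union_subset (subset_union_right) hT.1),
      nsmul_eq_mul]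
  rw [Finset.sum_congr rfl hterm]
  rw [Finset.sum_eq_single R]
  · have : U ∪ R = R ∪ U := union_comm _ _
    rw [this, Nat.sub_self, pow_zero, Nat.cast_one, one_mul]
  · intro T hT hne
    rw [mem_powersetCard] at hT
    have hss : U ∪ T ⊂ R ∪ U := by
      refine ssubset_of_subset_of_ne (union_subset (subset_union_right) hT.1) ?_
      intro h
      apply hne
      have hRT : R ⊆ T := by
        intro x hx
        have : x ∈ U ∪ T := h ▸ mem_union_left U hx
        rcases mem_union.1 this with h' | h'
        · exact absurd hx (Finset.disjoint_left.1 hU h')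
        · exact h'
      exact (Finset.eq_of_subset_of_card_le hRT (by omega)).symm
    have : (R ∪ U).card - (U ∪ T).card ≠ 0 := by
      have := Finset.card_lt_card hss
      omega
    rw [Nat.cast_pow, show ((2 : ℕ) : ZMod 2) = 0 by decide, zero_pow this, zero_mul]
  · intro h
    exact absurd (mem_powersetCard.2 ⟨subset_union_left, hR⟩) h

/-- The binary shortened projective Reed–Muller code PRM(r, m−1) is a
systematic (n, k) 2^(m−r)-server PIR code with `n = ∑_{i=r}^m C(m,i)` and `k = C(m,r)`:
each message symbol `a(R)` has `2^(m-r)` pairwise disjoint nonempty recovery families of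
coordinates (subsets of `[m]` of cardinality ≥ r), one of which is the singleton `{R}`. -/
theorem stmt_2 (m r : ℕ) (hm : 1 ≤ m) (hr : 1 ≤ r) (hrm : r ≤ m) :
    ((Finset.univ.filter (fun S : Finset (Fin m) => r ≤ S.card)).card
        = ∑ i ∈ Finset.Icc r m, m.choose i) ∧
    ((Finset.univ.filter (fun S : Finset (Fin m) => S.card = r)).card = m.choose r) ∧
    (∀ R : Finset (Fin m), R.card = r →
      ∃ F : Fin (2 ^ (m - r)) → Finset (Finset (Fin m)),
        (∀ t, (F t).Nonempty) ∧
        (∀ t, ∀ S ∈ F t, r ≤ S.card) ∧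
        (∀ t₁ t₂, t₁ ≠ t₂ → Disjoint (F t₁) (F t₂)) ∧
        (∀ a : Finset (Fin m) → ZMod 2, ∀ t,
          ∑ S ∈ F t, (∑ T ∈ S.powerset.filter (fun T => T.card = r), a T) = a R) ∧
        (∃ t, F t = {R})) := by
  refine ⟨?_, ?_, ?_⟩
  · have : (Finset.univ.filter (fun S : Finset (Fin m) => r ≤ S.card))
        = (Finset.Icc r m).biUnion (fun i => powersetCard i univ) := by
      ext S
      simp only [mem_filter, mem_univ, true_and, mem_biUnion, mem_Icc, mem_powersetCard,
        subset_univ, and_true]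
      constructor
      · intro h
        exact ⟨S.card, ⟨h, by simpa using S.card_le_univ⟩, rfl⟩
      · rintro ⟨i, ⟨h1, _⟩, rfl⟩; exact h1
    rw [this, card_biUnion]
    · refine Finset.sum_congr rfl fun i _ => ?_
      rw [card_powersetCard]
      simp
    · intro i _ j _ hij
      simp only [Finset.disjoint_left, mem_powersetCard]
      rintro S ⟨-, rfl⟩ ⟨-, h⟩
      exact hij h
  · have : (Finset.univ.filter (fun S : Finset (Fin m) => S.card = r))
        = powersetCard r univ := by
      ext S; simp [mem_powersetCard]
    rw [this, card_powersetCard]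
    simp
  · intro R hR
    have hcard : (Rᶜ : Finset (Fin m)).powerset.card = 2 ^ (m - r) := by
      rw [card_powerset, card_compl, hR]
      simp
    let e := (Rᶜ : Finset (Fin m)).powerset.equivFinOfCardEq hcard
    set U : Fin (2 ^ (m - r)) → Finset (Fin m) := fun t => ((e.symm t : _) : Finset (Fin m))
      with hUdef
    have hUdisj : ∀ t, Disjoint (U t) R := by
      intro t
      have : U t ∈ (Rᶜ : Finset (Fin m)).powerset := (e.symm t).2
      rw [mem_powerset] at this
      rw [Finset.disjoint_left]
      intro x hx
      exact (mem_compl.1 (this hx))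
    have hUinj : Function.Injective U := by
      intro t₁ t₂ h
      have := Subtype.coe_injective (a₁ := e.symm t₁) (a₂ := e.symm t₂) h
      exact e.symm.injective this
    refine ⟨fun t => (Finset.Icc (U t) (R ∪ U t)).filter (fun V => r ≤ V.card),
      ?_, ?_, ?_, ?_, ?_⟩
    · intro t
      refine ⟨R ∪ U t, ?_⟩
      simp only [mem_filter, Finset.mem_Icc, le_eq_subset]
      exact ⟨⟨subset_union_right, subset_rfl⟩, hR ▸ card_le_card subset_union_left⟩
    · intro t S hS
      exact (mem_filter.1 hS).2
    · intro t₁ t₂ hne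
      rw [Finset.disjoint_left]
      intro V h1 h2
      apply hne
      apply hUinj
      have key : ∀ t, V ∈ (Finset.Icc (U t) (R ∪ U t)).filter (fun V => r ≤ V.card) →
          V \ R = U t := by
        intro t ht
        rw [mem_filter, Finset.mem_Icc] at ht
        apply Finset.Subset.antisymm
        · intro x hx
          rw [mem_sdiff] at hx
          rcases mem_union.1 (ht.1.2 hx.1) with h | h
          · exact absurd h hx.2
          · exact h
        · intro x hx
          rw [mem_sdiff]
          exact ⟨ht.1.1 hx, Finset.disjoint_left.1 (hUdisj t) hx⟩
      rw [← key t₁ h1, ← key t₂ h2]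
    · intro a t
      exact prm_key m r R (U t) hR (hUdisj t) a
    · refine ⟨e ⟨∅, by simp⟩, ?_⟩
      have hU0 : U (e ⟨∅, by simp⟩) = ∅ := by
        simp only [hUdef, Equiv.symm_apply_apply]
      show (Finset.Icc (U (e ⟨∅, by simp⟩)) (R ∪ U (e ⟨∅, by simp⟩))).filter
          (fun V => r ≤ V.card) = {R}
      rw [hU0]
      ext V
      simp only [mem_filter, Finset.mem_Icc, le_eq_subset, empty_subset, true_and,
        union_empty, mem_singleton]
      constructor
      · rintro ⟨h1, h2⟩
        exact Finset.eq_of_subset_of_card_le h1 (by omega)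
      · rintro rfl
        exact ⟨subset_rfl, hR.ge⟩
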